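/- Let V = ℂ³ with basis {u | v, h} (u even; v, h odd) and Lie superalgebra bracket [u,v] = h, [u,h] = c₂₆ v + c₃₆ h with c₂₆ c₃₆ ≠ 0 (other brackets zero, extended by skew-supersymmetry). Suppose the quadratic t² + c₃₆ c₂₆⁻¹ t - c₂₆⁻¹ has two distinct roots k₁ ≠ k₂ (so k₁k₂ = -c₂₆⁻¹, k₁+k₂ = -c₃₆c₂₆⁻¹). Then this Lie superalgebra is isomorphic to L₃^λ with λ = k₁/k₂, where L₃^λ has basis {e₁ | e₂, e₃} and brackets [e₁,e₂] = e₂, [e₁,e₃] = λ e₃, all odd-odd brackets zero. -/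
import Mathlib


namespace Stmt14

/-- V = ℂ³ with basis u = e₀ (even), v = e₁, h = e₂ (odd). -/
abbrev V : Type := Fin 3 → ℂ

def hom (p : Bool) (x : V) : Prop := if p then x 0 = 0 else (x 1 = 0 ∧ x 2 = 0)

/-- bracket: [u,v] = h, [u,h] = c₂₆·v + c₃₆·h (extended by skew-supersymmetry). -/
def br (c26 c36 : ℂ) (x y : V) : V :=
  ![0, c26 * (x 0 * y 2 - x 2 * y 0),
    (x 0 * y 1 - x 1 * y 0) + c36 * (x 0 * y 2 - x 2 * y 0)]

/-- L₃^λ: [e₁,e₂] = e₂, [e₁,e₃] = λ·e₃, all odd-odd brackets zero. -/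
def brL (l : ℂ) (x y : V) : V :=
  ![0, x 0 * y 1 - x 1 * y 0, l * (x 0 * y 2 - x 2 * y 0)]

def IsLin (f : V → V) : Prop := ∀ (c : ℂ) (x y : V), f (c • x + y) = c • f x + f y

def IsEven (f : V → V) : Prop := ∀ (p : Bool) (x : V), hom p x → hom p (f x)

theorem stmt14 (c26 c36 k1 k2 : ℂ) (hc : c26 * c36 ≠ 0) (hk : k1 ≠ k2)
    (hprod : k1 * k2 = -c26⁻¹) (hsum : k1 + k2 = -(c36 * c26⁻¹)) :
    ∃ φ : V → V, IsLin φ ∧ IsEven φ ∧ Function.Bijective φ ∧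
      ∀ x y : V, φ (br c26 c36 x y) = brL (k1 / k2) (φ x) (φ y) := by
  have hc26 : c26 ≠ 0 := fun h => hc (by simp [h])
  have hinv : c26⁻¹ ≠ 0 := inv_ne_zero hc26
  have hk1 : k1 ≠ 0 := by
    intro h; apply hinv
    have := hprod; rw [h, zero_mul] at this
    linear_combination this
  have hk2 : k2 ≠ 0 := by
    intro h; apply hinv
    have := hprod; rw [h, mul_zero] at this
    linear_combination this
  have hdk : k1 - k2 ≠ 0 := sub_ne_zero.mpr hk
  have e1 : c26 = -(k1 * k2)⁻¹ := by rw [hprod, inv_neg, inv_inv, neg_neg]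
  have hcinv : c26⁻¹ = -(k1 * k2) := by linear_combination hprod
  have e2 : c36 = (k1 + k2) * (k1 * k2)⁻¹ := by
    rw [hcinv] at hsum
    field_simp
    linear_combination -hsum
  refine ⟨fun x => ![x 0 / k1, (k1 * x 1 + x 2) / (k1 - k2),
      -(k2 * x 1 + x 2) / (k1 - k2)], ?_, ?_, ?_, ?_⟩
  · intro c x y
    funext i
    fin_cases i <;>
      simp [Pi.add_apply, Pi.smul_apply, smul_eq_mul] <;> ring
  · intro p x hx
    cases p with
    | false =>
      obtain ⟨h1, h2⟩ := hx
      exact ⟨by simp [h1, h2], by simp [h1, h2]⟩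
    | true =>
      simp only [hom, if_true] at hx ⊢
      simp [hx]
  · rw [Function.bijective_iff_has_inverse]
    refine ⟨fun y => ![k1 * y 0, y 1 + y 2, -(k2 * y 1 + k1 * y 2)], ?_, ?_⟩
    · intro x
      funext i
      fin_cases i <;> (simp; try field_simp; try ring)
    · intro y
      funext i
      fin_cases i <;> (simp; try field_simp; try ring)
  · intro x y
    funext i
    fin_cases i <;>
      (simp [br, brL]; try rw [e1, e2]; try field_simp; try ring)

end Stmt14
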